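/- Assume condition (*). If I' ⊊ I are two M-intervals, then a_{I'}(x) > a_I(x). -/

import Mathlib

open Finset

/-- Interval average `a_{[a:b]}(x) = (x_a + … + x_b)/(b-a+1)`. -/
noncomputable def iavg (x : ℤ → ℝ) (a b : ℤ) : ℝ :=
  (∑ j ∈ Finset.Icc a b, x j) / ((b - a + 1 : ℤ) : ℝ)

/-- Right maximal function `M^r x(i) = sup_{r ≥ 1} a_{[i : i+r−1]}(x)`. -/
noncomputable def Mr (x : ℤ → ℝ) (i : ℤ) : ℝ :=
  sSup {a : ℝ | ∃ r : ℕ, 1 ≤ r ∧ a = iavg x i (i + (r : ℤ) - 1)}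

/-- Condition (*): `x_1, …, x_n` are linearly independent over `ℚ`. -/
def StarCond (n : ℕ) (x : ℤ → ℝ) : Prop :=
  LinearIndependent ℚ (fun i : Fin n => x ((i : ℤ) + 1))

/-- `[i:k]` is a (short) maximal interval: `0 ≤ k − i < n` and
`a_{[i:k]}(x) = M^r x(i)`. -/
def IsMaxInt (n : ℕ) (x : ℤ → ℝ) (i k : ℤ) : Prop :=
  i ≤ k ∧ k - i < (n : ℤ) ∧ iavg x i k = Mr x i

/-- `[i:k]` is an `M`-interval: maximal, and no `[i:k']` with `i ≤ k' < k`
is maximal. -/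
def IsMInt (n : ℕ) (x : ℤ → ℝ) (i k : ℤ) : Prop :=
  IsMaxInt n x i k ∧ ∀ k' : ℤ, i ≤ k' → k' < k → iavg x i k' ≠ Mr x i

lemma per_all (n : ℕ) (x : ℤ → ℝ) (hper : ∀ i, x (i + (n : ℤ)) = x i) :
    ∀ (c : ℤ) (m : ℤ), x (m + c * n) = x m := by
  intro c
  induction c using Int.induction_on with
  | zero => simp
  | succ c ih =>
      intro m
      have : m + (c + 1) * n = (m + c * n) + n := by ring
      rw [this, hper, ih]
  | pred c ih =>
      intro m
      have : m + (-c - 1) * n + n = m + (-c) * n := by ring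
      have h2 := hper (m + (-(c:ℤ) - 1) * n)
      rw [this] at h2
      exact h2.symm.trans (ih m)

lemma x_le_P (n : ℕ) (hn : 1 ≤ n) (x : ℤ → ℝ)
    (hpos : ∀ i, 0 ≤ x i) (hper : ∀ i, x (i + (n : ℤ)) = x i) (m : ℤ) :
    x m ≤ ∑ j ∈ Finset.Icc (1 : ℤ) n, x j := by
  have hn0 : (0 : ℤ) < n := by exact_mod_cast hn
  set m' : ℤ := (m - 1) % n + 1 with hm'
  have h1 : (0 : ℤ) ≤ (m - 1) % n := Int.emod_nonneg _ (by omega)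
  have h2 : (m - 1) % n < n := Int.emod_lt_of_pos _ hn0
  have hdiv := Int.mul_ediv_add_emod (m - 1) n
  have hx : x m = x m' := by
    have := per_all n x hper ((m - 1) / n) m'
    have he : m' + ((m - 1) / n) * n = m := by
      rw [hm']; linarith [hdiv, mul_comm ((m - 1) / n) (n:ℤ)]
    rw [he] at this
    exact this
  rw [hx]
  exact Finset.single_le_sum (fun j _ => hpos j) (by simp [hm']; omega)

lemma bddAbove_Mr (n : ℕ) (hn : 1 ≤ n) (x : ℤ → ℝ)
    (hpos : ∀ i, 0 ≤ x i) (hper : ∀ i, x (i + (n : ℤ)) = x i) (i : ℤ) :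
    BddAbove {a : ℝ | ∃ r : ℕ, 1 ≤ r ∧ a = iavg x i (i + (r : ℤ) - 1)} := by
  refine ⟨∑ j ∈ Finset.Icc (1 : ℤ) n, x j, ?_⟩
  rintro a ⟨r, hr, rfl⟩
  set P := ∑ j ∈ Finset.Icc (1 : ℤ) n, x j with hP
  have hP0 : 0 ≤ P := Finset.sum_nonneg (fun j _ => hpos j)
  have hb : i ≤ i + (r : ℤ) - 1 := by omega
  have hcard : (Finset.Icc i (i + (r : ℤ) - 1)).card = r := by
    rw [Int.card_Icc]; omega
  have hsum : ∑ j ∈ Finset.Icc i (i + (r : ℤ) - 1), x j ≤ r * P := by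
    calc ∑ j ∈ Finset.Icc i (i + (r : ℤ) - 1), x j
        ≤ ∑ j ∈ Finset.Icc i (i + (r : ℤ) - 1), P :=
          Finset.sum_le_sum (fun j _ => x_le_P n hn x hpos hper j)
      _ = r * P := by rw [Finset.sum_const, hcard]; simp
  unfold iavg
  have hden : ((i + (r : ℤ) - 1 - i + 1 : ℤ) : ℝ) = (r : ℝ) := by push_cast; ring
  rw [hden, div_le_iff₀ (by exact_mod_cast hr : (0:ℝ) < r)]
  linarith [hsum]

lemma le_Mr (n : ℕ) (hn : 1 ≤ n) (x : ℤ → ℝ)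
    (hpos : ∀ i, 0 ≤ x i) (hper : ∀ i, x (i + (n : ℤ)) = x i)
    (i k : ℤ) (hik : i ≤ k) : iavg x i k ≤ Mr x i := by
  apply le_csSup (bddAbove_Mr n hn x hpos hper i)
  exact ⟨(k - i + 1).toNat, by omega, by congr 1; omega⟩

/-- If `I' ⊊ I` are two `M`-intervals, then `a_{I'}(x) > a_I(x)`. -/
theorem MInt_nested_avg_gt (n : ℕ) (hn : 1 ≤ n) (x : ℤ → ℝ)
    (hpos : ∀ i, 0 ≤ x i) (hper : ∀ i, x (i + (n : ℤ)) = x i)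
    (hstar : StarCond n x) (i k i' k' : ℤ)
    (hI : IsMInt n x i k) (hI' : IsMInt n x i' k')
    (hsub : Finset.Icc i' k' ⊂ Finset.Icc i k) :
    iavg x i k < iavg x i' k' := by
  obtain ⟨⟨hik, hkn, havg⟩, hmin⟩ := hI
  obtain ⟨⟨hik', hkn', havg'⟩, hmin'⟩ := hI'
  have hmem1 : i' ∈ Finset.Icc i k := hsub.1 (by simp [hik'])
  have hmem2 : k' ∈ Finset.Icc i k := hsub.1 (by simp [hik'])
  simp only [Finset.mem_Icc] at hmem1 hmem2
  -- i < i'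
  have hii' : i < i' := by
    rcases lt_or_eq_of_le hmem1.1 with h | h
    · exact h
    · exfalso
      subst h
      have hkk : k' < k := by
        rcases lt_or_eq_of_le hmem2.2 with h | h
        · exact h
        · subst h; exact ((Finset.ssubset_iff_subset_ne.mp hsub).2 rfl).elim
      exact hmin k' hik' hkk (havg'.trans rfl)
  -- split sum
  have hsplit : ∑ j ∈ Finset.Icc i k, x j
      = ∑ j ∈ Finset.Icc i (i' - 1), x j + ∑ j ∈ Finset.Icc i' k, x j := by
    have hunion : Finset.Icc i k = Finset.Icc i (i'-1) ∪ Finset.Icc i' k := by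
      ext j; simp only [Finset.mem_Icc, Finset.mem_union]; omega
    have hdisj : Disjoint (Finset.Icc i (i'-1)) (Finset.Icc i' k) := by
      rw [Finset.disjoint_left]
      intro j hj hj'
      simp only [Finset.mem_Icc] at hj hj'
      omega
    rw [hunion, Finset.sum_union hdisj]
  -- prefix average strictly less
  have hpre : iavg x i (i' - 1) < iavg x i k := by
    have hle : iavg x i (i' - 1) ≤ Mr x i := le_Mr n hn x hpos hper i (i'-1) (by omega)
    have hne : iavg x i (i' - 1) ≠ Mr x i := hmin (i'-1) (by omega) (by omega)
    rw [havg]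
    exact lt_of_le_of_ne hle hne
  -- suffix average strictly greater
  set S1 := ∑ j ∈ Finset.Icc i (i' - 1), x j with hS1
  set S2 := ∑ j ∈ Finset.Icc i' k, x j with hS2
  have hp : (0:ℝ) < ((i' - 1 - i + 1 : ℤ) : ℝ) := by exact_mod_cast (by omega : (0:ℤ) < i' - 1 - i + 1)
  have hq : (0:ℝ) < ((k - i' + 1 : ℤ) : ℝ) := by
    exact_mod_cast (by omega : (0:ℤ) < k - i' + 1)
  have ht : (0:ℝ) < ((k - i + 1 : ℤ) : ℝ) := by exact_mod_cast (by omega : (0:ℤ) < k - i + 1)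
  have hsuf : iavg x i k < iavg x i' k := by
    unfold iavg at hpre ⊢
    rw [← hS1, ← hS2] at *
    rw [hsplit]
    rw [div_lt_div_iff₀ hp ht] at hpre
    rw [div_lt_div_iff₀ ht hq]
    have hcast : ((k - i + 1 : ℤ) : ℝ) = ((i' - 1 - i + 1 : ℤ) : ℝ) + ((k - i' + 1 : ℤ) : ℝ) := by
      push_cast; ring
    rw [hcast] at hpre ⊢
    nlinarith [hpre, hq, hp]
  have hfin : iavg x i' k ≤ iavg x i' k' := by
    rw [havg']
    exact le_Mr n hn x hpos hper i' k hmem1.2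
  linarith
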